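/- Let μ ∈ ℝ be non-integer with f = μ-⌊μ⌋, c = ⌈μ⌉-μ. As γ → 0⁺, the expected value of the Danorm distribution p(n|μ,γ) ∝ γ^{(n-μ)²} on ℤ converges to r(μ) (the nearest integer to μ) if c ≠ f, and to μ if c = f. -/

import Mathlib

open Filter Topology

lemma danorm_aux_nat (ν : ℝ) :
    Summable fun n : ℕ => (1/2 : ℝ) ^ (((n : ℝ) + ν) ^ 2) * ((n : ℝ) + 1) := by
  have hgeo : Summable fun n : ℕ => (1/2 : ℝ) ^ ν * (((n : ℝ) + 1) * (1/2 : ℝ) ^ n) := by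
    apply Summable.mul_left
    have h1 : Summable fun n : ℕ => ((n : ℝ)) ^ 1 * (1/2 : ℝ) ^ n :=
      summable_pow_mul_geometric_of_norm_lt_one 1 (by norm_num [Real.norm_eq_abs])
    have h2 : Summable fun n : ℕ => (1/2 : ℝ) ^ n := summable_geometric_of_lt_one (by norm_num) (by norm_num)
    exact (h1.add h2).congr (fun n => by ring)
  apply Summable.of_norm_bounded_eventually_nat hgeo
  filter_upwards [eventually_ge_atTop (⌈1 - ν⌉₊ + 1)] with n hn
  have hn1 : (1 : ℝ) ≤ (n : ℝ) + ν := by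
    have : (⌈1 - ν⌉₊ : ℝ) ≥ 1 - ν := Nat.le_ceil _
    have hcast : ((⌈1 - ν⌉₊ + 1 : ℕ) : ℝ) ≤ (n : ℝ) := by exact_mod_cast hn
    push_cast at hcast
    linarith
  have hexp : (n : ℝ) + ν ≤ ((n : ℝ) + ν) ^ 2 := by nlinarith
  have hb : (1/2 : ℝ) ^ (((n : ℝ) + ν) ^ 2) ≤ (1/2 : ℝ) ^ ((n : ℝ) + ν) :=
    Real.rpow_le_rpow_of_exponent_ge (by norm_num) (by norm_num) hexp
  have heq : (1/2 : ℝ) ^ ((n : ℝ) + ν) = (1/2 : ℝ) ^ ν * (1/2 : ℝ) ^ n := by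
    rw [Real.rpow_add (by norm_num), Real.rpow_natCast]; ring
  rw [Real.norm_eq_abs, abs_of_nonneg (by positivity)]
  calc (1/2 : ℝ) ^ (((n : ℝ) + ν) ^ 2) * ((n : ℝ) + 1)
      ≤ (1/2 : ℝ) ^ ((n : ℝ) + ν) * ((n : ℝ) + 1) := by
        apply mul_le_mul_of_nonneg_right hb (by positivity)
    _ = (1/2 : ℝ) ^ ν * (((n : ℝ) + 1) * (1/2 : ℝ) ^ n) := by rw [heq]; ring

lemma danorm_aux_int (μ a : ℝ) :
    Summable fun n : ℤ => (1/2 : ℝ) ^ ((((n : ℝ)) - μ) ^ 2 - a) * (|(n : ℝ)| + 1) := by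
  have hcore : Summable fun n : ℤ => (1/2 : ℝ) ^ ((((n : ℝ)) - μ) ^ 2) * (|(n : ℝ)| + 1) := by
    apply Summable.of_nat_of_neg
    · apply (danorm_aux_nat (-μ)).congr
      intro n
      push_cast
      rw [abs_of_nonneg (by positivity)]
      ring_nf
    · apply (danorm_aux_nat μ).congr
      intro n
      push_cast
      rw [abs_neg, abs_of_nonneg (by positivity)]
      ring_nf
  apply (hcore.mul_left ((1/2 : ℝ) ^ (-a))).congr
  intro n
  rw [← mul_assoc, ← Real.rpow_add (by norm_num)]
  ring_nf

lemma danorm_aux_tendsto (μ a : ℝ) (ha : ∀ n : ℤ, a ≤ ((n : ℝ) - μ) ^ 2) (g : ℤ → ℝ)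
    (hg : ∀ n : ℤ, |g n| ≤ |(n : ℝ)| + 1) :
    Tendsto (fun γ : ℝ => ∑' n : ℤ, γ ^ (((n : ℝ) - μ) ^ 2 - a) * g n) (𝓝[>] (0:ℝ))
      (𝓝 (∑' n : ℤ, if ((n : ℝ) - μ) ^ 2 = a then g n else 0)) := by
  apply tendsto_tsum_of_dominated_convergence (danorm_aux_int μ a)
  · intro n
    rcases eq_or_lt_of_le (ha n) with h | h
    · rw [if_pos h.symm]
      have : (fun γ : ℝ => γ ^ (((n : ℝ) - μ) ^ 2 - a) * g n) = fun _ => g n := by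
        funext γ; rw [← h, sub_self, Real.rpow_zero, one_mul]
      rw [this]; exact tendsto_const_nhds
    · have ht : 0 < ((n : ℝ) - μ) ^ 2 - a := sub_pos.mpr h
      rw [if_neg (by linarith [h] : ¬ ((n : ℝ) - μ) ^ 2 = a)]
      have h1 : Tendsto (fun γ : ℝ => γ ^ (((n : ℝ) - μ) ^ 2 - a)) (𝓝[>] (0:ℝ)) (𝓝 0) := by
        have h2 := (Real.continuousAt_rpow_const 0 _ (Or.inr ht.le)).tendsto
        rw [Real.zero_rpow ht.ne'] at h2
        exact h2.mono_left nhdsWithin_le_nhds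
      simpa using h1.mul_const (g n)
  · filter_upwards [Ioc_mem_nhdsGT_of_mem (by norm_num : (0:ℝ) ∈ Set.Ico (0:ℝ) (1/2))]
      with γ hγ n
    rw [Real.norm_eq_abs, abs_mul, abs_of_nonneg (Real.rpow_nonneg hγ.1.le _)]
    apply mul_le_mul (Real.rpow_le_rpow hγ.1.le hγ.2 (sub_nonneg.mpr (ha n))) (hg n)
      (abs_nonneg _) (Real.rpow_nonneg (by norm_num) _)

lemma danorm_key (μ a γ : ℝ) (hγ : 0 < γ) :
    (∑' n : ℤ, (γ ^ (((n : ℝ) - μ) ^ 2) / ∑' m : ℤ, γ ^ (((m : ℝ) - μ) ^ 2)) * (n : ℝ))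
      = (∑' n : ℤ, γ ^ (((n : ℝ) - μ) ^ 2 - a) * (n : ℝ))
        / (∑' n : ℤ, γ ^ (((n : ℝ) - μ) ^ 2 - a) * 1) := by
  have hγa : (0:ℝ) < γ ^ a := Real.rpow_pos_of_pos hγ a
  have hS : (∑' m : ℤ, γ ^ (((m : ℝ) - μ) ^ 2))
      = γ ^ a * ∑' n : ℤ, γ ^ (((n : ℝ) - μ) ^ 2 - a) * 1 := by
    rw [← tsum_mul_left]
    refine tsum_congr fun n => ?_
    rw [mul_one, ← Real.rpow_add hγ]
    ring_nf
  calc (∑' n : ℤ, (γ ^ (((n : ℝ) - μ) ^ 2) / ∑' m : ℤ, γ ^ (((m : ℝ) - μ) ^ 2)) * (n : ℝ))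
      = ∑' n : ℤ, (γ ^ (((n : ℝ) - μ) ^ 2 - a) * (n : ℝ))
          / (∑' n : ℤ, γ ^ (((n : ℝ) - μ) ^ 2 - a) * 1) := by
        refine tsum_congr fun n => ?_
        have hsplit : γ ^ (((n : ℝ) - μ) ^ 2) = γ ^ a * γ ^ (((n : ℝ) - μ) ^ 2 - a) := by
          rw [← Real.rpow_add hγ]
          ring_nf
        rw [hS, hsplit, mul_div_mul_left _ _ hγa.ne', div_mul_eq_mul_div]
    _ = _ := tsum_div_const


/-- As `γ → 0⁺`, the expected value of the Danorm distribution
`p(n) = γ^{(n-μ)²} / ∑_{m∈ℤ} γ^{(m-μ)²}` on ℤ converges to the nearest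
integer `r(μ)` if `c ≠ f`, and to `μ` if `c = f`, for non-integer `μ`,
`f = μ-⌊μ⌋`, `c = ⌈μ⌉-μ` with `⌈μ⌉ = ⌊μ⌋+1`, and `r(μ) = ⌊μ⌋` if `f < c`,
`r(μ) = ⌈μ⌉` if `f > c`. -/
theorem danorm_expectation_limit (μ : ℝ) (hμ : ∀ m : ℤ, (m : ℝ) ≠ μ)
    (f c : ℝ) (hf : f = μ - ⌊μ⌋) (hc : c = (⌊μ⌋ : ℝ) + 1 - μ) :
    (c ≠ f → Tendsto
      (fun γ : ℝ => ∑' n : ℤ,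
        (γ ^ (((n : ℝ) - μ) ^ 2) / ∑' m : ℤ, γ ^ (((m : ℝ) - μ) ^ 2)) * (n : ℝ))
      (𝓝[>] 0) (𝓝 (if f < c then (⌊μ⌋ : ℝ) else (⌊μ⌋ : ℝ) + 1))) ∧
    (c = f → Tendsto
      (fun γ : ℝ => ∑' n : ℤ,
        (γ ^ (((n : ℝ) - μ) ^ 2) / ∑' m : ℤ, γ ^ (((m : ℝ) - μ) ^ 2)) * (n : ℝ))
      (𝓝[>] 0) (𝓝 μ)) := by
  have hk1 : (⌊μ⌋ : ℝ) < μ := lt_of_le_of_ne (Int.floor_le μ) (hμ ⌊μ⌋)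
  have hk2 : μ < (⌊μ⌋ : ℝ) + 1 := Int.lt_floor_add_one μ
  have hf0 : 0 < f := by rw [hf]; linarith
  have hc0 : 0 < c := by rw [hc]; linarith
  have main_aux : ∀ a L1 L2 : ℝ, (∀ n : ℤ, a ≤ ((n : ℝ) - μ) ^ 2) →
      (∑' n : ℤ, if ((n : ℝ) - μ) ^ 2 = a then (n : ℝ) else 0) = L1 →
      (∑' n : ℤ, if ((n : ℝ) - μ) ^ 2 = a then (1 : ℝ) else 0) = L2 → L2 ≠ 0 →
      Tendsto (fun γ : ℝ => ∑' n : ℤ,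
          (γ ^ (((n : ℝ) - μ) ^ 2) / ∑' m : ℤ, γ ^ (((m : ℝ) - μ) ^ 2)) * (n : ℝ))
        (𝓝[>] 0) (𝓝 (L1 / L2)) := by
    intro a L1 L2 ha h1 h2 hL2
    have hnum := danorm_aux_tendsto μ a ha (fun n => (n : ℝ))
      (fun n => by show |(n:ℝ)| ≤ |(n:ℝ)| + 1; linarith [abs_nonneg ((n:ℝ))])
    have hden := danorm_aux_tendsto μ a ha (fun _ => (1 : ℝ))
      (fun n => by rw [abs_one]; linarith [abs_nonneg ((n:ℝ))])
    rw [h1] at hnum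
    rw [h2] at hden
    refine Tendsto.congr' ?_ (hnum.div hden hL2)
    filter_upwards [self_mem_nhdsWithin] with γ hγ
    exact (danorm_key μ a γ hγ).symm
  constructor
  · intro hne
    rcases lt_or_gt_of_ne hne with hlt | hlt
    · -- c < f : minimizer ⌊μ⌋ + 1, a = c ^ 2
      have ha : ∀ n : ℤ, c ^ 2 ≤ ((n : ℝ) - μ) ^ 2 := by
        intro n
        rcases le_or_gt n ⌊μ⌋ with h | h
        · have : (n : ℝ) ≤ (⌊μ⌋ : ℝ) := by exact_mod_cast h
          nlinarith
        · have : ((⌊μ⌋ : ℝ) + 1) ≤ (n : ℝ) := by exact_mod_cast h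
          nlinarith
      have hiff : ∀ n : ℤ, ((n : ℝ) - μ) ^ 2 = c ^ 2 ↔ n = ⌊μ⌋ + 1 := by
        intro n
        constructor
        · intro h
          by_contra hb
          rcases lt_or_gt_of_ne hb with h1 | h1
          · have h4 : n ≤ ⌊μ⌋ := by omega
            have h2 : (n : ℝ) ≤ (⌊μ⌋ : ℝ) := by exact_mod_cast h4
            nlinarith
          · have h4 : ⌊μ⌋ + 2 ≤ n := by omega
            have h2 : ((⌊μ⌋ : ℝ) + 2) ≤ (n : ℝ) := by exact_mod_cast h4
            nlinarith
        · rintro rfl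
          push_cast
          have hcv : (⌊μ⌋ : ℝ) + 1 - μ = c := by linarith
          rw [← hcv]
      have h1 : (∑' n : ℤ, if ((n : ℝ) - μ) ^ 2 = c ^ 2 then (n : ℝ) else 0)
          = (⌊μ⌋ : ℝ) + 1 := by
        rw [tsum_eq_single (⌊μ⌋ + 1) (fun b hb => if_neg (fun h => hb ((hiff b).mp h))),
          if_pos ((hiff _).mpr rfl)]
        push_cast; ring
      have h2 : (∑' n : ℤ, if ((n : ℝ) - μ) ^ 2 = c ^ 2 then (1 : ℝ) else 0) = 1 := by
        rw [tsum_eq_single (⌊μ⌋ + 1) (fun b hb => if_neg (fun h => hb ((hiff b).mp h))),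
          if_pos ((hiff _).mpr rfl)]
      have := main_aux (c ^ 2) ((⌊μ⌋ : ℝ) + 1) 1 ha h1 h2 one_ne_zero
      rw [div_one] at this
      simpa [if_neg (not_lt.mpr hlt.le)] using this
    · -- f < c : minimizer ⌊μ⌋, a = f ^ 2
      have ha : ∀ n : ℤ, f ^ 2 ≤ ((n : ℝ) - μ) ^ 2 := by
        intro n
        rcases le_or_gt n ⌊μ⌋ with h | h
        · have : (n : ℝ) ≤ (⌊μ⌋ : ℝ) := by exact_mod_cast h
          nlinarith
        · have : ((⌊μ⌋ : ℝ) + 1) ≤ (n : ℝ) := by exact_mod_cast h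
          nlinarith
      have hiff : ∀ n : ℤ, ((n : ℝ) - μ) ^ 2 = f ^ 2 ↔ n = ⌊μ⌋ := by
        intro n
        constructor
        · intro h
          by_contra hb
          rcases lt_or_gt_of_ne hb with h1 | h1
          · have h4 : n ≤ ⌊μ⌋ - 1 := by omega
            have h2 : (n : ℝ) ≤ (⌊μ⌋ : ℝ) - 1 := by exact_mod_cast h4
            nlinarith
          · have h4 : ⌊μ⌋ + 1 ≤ n := by omega
            have h2 : ((⌊μ⌋ : ℝ) + 1) ≤ (n : ℝ) := by exact_mod_cast h4
            nlinarith
        · rintro rfl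
          have hfk : (⌊μ⌋ : ℝ) - μ = -f := by linarith
          rw [hfk]
          ring
      have h1 : (∑' n : ℤ, if ((n : ℝ) - μ) ^ 2 = f ^ 2 then (n : ℝ) else 0) = (⌊μ⌋ : ℝ) := by
        rw [tsum_eq_single ⌊μ⌋ (fun b hb => if_neg (fun h => hb ((hiff b).mp h))),
          if_pos ((hiff _).mpr rfl)]
      have h2 : (∑' n : ℤ, if ((n : ℝ) - μ) ^ 2 = f ^ 2 then (1 : ℝ) else 0) = 1 := by
        rw [tsum_eq_single ⌊μ⌋ (fun b hb => if_neg (fun h => hb ((hiff b).mp h))),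
          if_pos ((hiff _).mpr rfl)]
      have := main_aux (f ^ 2) (⌊μ⌋ : ℝ) 1 ha h1 h2 one_ne_zero
      rw [div_one] at this
      simpa [if_pos hlt] using this
  · intro heq
    have hμ2 : μ = (⌊μ⌋ : ℝ) + 1/2 := by rw [hf, hc] at heq; linarith
    have hfv : f = 1/2 := by rw [hf]; linarith
    have ha : ∀ n : ℤ, f ^ 2 ≤ ((n : ℝ) - μ) ^ 2 := by
      intro n
      rcases le_or_gt n ⌊μ⌋ with h | h
      · have : (n : ℝ) ≤ (⌊μ⌋ : ℝ) := by exact_mod_cast h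
        nlinarith
      · have : ((⌊μ⌋ : ℝ) + 1) ≤ (n : ℝ) := by exact_mod_cast h
        nlinarith
    have hiff : ∀ n : ℤ, ((n : ℝ) - μ) ^ 2 = f ^ 2 ↔ n = ⌊μ⌋ ∨ n = ⌊μ⌋ + 1 := by
      intro n
      constructor
      · intro h
        by_contra hb
        push_neg at hb
        obtain ⟨hb1, hb2⟩ := hb
        rcases le_or_gt n ⌊μ⌋ with h1 | h1
        · have h4 : n ≤ ⌊μ⌋ - 1 := by omega
          have h3 : (n : ℝ) ≤ (⌊μ⌋ : ℝ) - 1 := by exact_mod_cast h4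
          nlinarith
        · have h4 : ⌊μ⌋ + 2 ≤ n := by omega
          have h3 : ((⌊μ⌋ : ℝ) + 2) ≤ (n : ℝ) := by exact_mod_cast h4
          nlinarith
      · rintro (rfl | rfl)
        · have hfk : (⌊μ⌋ : ℝ) - μ = -f := by linarith
          rw [hfk]
          ring
        · push_cast
          have hck : (⌊μ⌋ : ℝ) + 1 - μ = f := by linarith
          rw [← heq, hc]
    have hnotmem : ∀ b : ℤ, b ∉ ({⌊μ⌋, ⌊μ⌋ + 1} : Finset ℤ) →
        ¬ ((b : ℝ) - μ) ^ 2 = f ^ 2 := by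
      intro b hb h
      rcases (hiff b).mp h with rfl | rfl <;> simp at hb
    have hpair : (⌊μ⌋ : ℤ) ≠ ⌊μ⌋ + 1 := by omega
    have h1 : (∑' n : ℤ, if ((n : ℝ) - μ) ^ 2 = f ^ 2 then (n : ℝ) else 0)
        = 2 * (⌊μ⌋ : ℝ) + 1 := by
      rw [tsum_eq_sum (s := {⌊μ⌋, ⌊μ⌋ + 1}) (fun b hb => if_neg (hnotmem b hb)),
        Finset.sum_pair hpair, if_pos ((hiff _).mpr (Or.inl rfl)),
        if_pos ((hiff _).mpr (Or.inr rfl))]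
      push_cast; ring
    have h2 : (∑' n : ℤ, if ((n : ℝ) - μ) ^ 2 = f ^ 2 then (1 : ℝ) else 0) = 2 := by
      rw [tsum_eq_sum (s := {⌊μ⌋, ⌊μ⌋ + 1}) (fun b hb => if_neg (hnotmem b hb)),
        Finset.sum_pair hpair, if_pos ((hiff _).mpr (Or.inl rfl)),
        if_pos ((hiff _).mpr (Or.inr rfl))]
      norm_num
    have := main_aux (f ^ 2) (2 * (⌊μ⌋ : ℝ) + 1) 2 ha h1 h2 two_ne_zero
    have hval : (2 * (⌊μ⌋ : ℝ) + 1) / 2 = μ := by linarith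
    rwa [hval] at this
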